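/- Let α₀ : ℝ → ℝ be continuous with α₀(η)² → 1 as |η| → ∞ and such that 1/α₀² − 1 is integrable on ℝ. Then the function Ψ(η) = K·|α₀(η)|^{-3/2}·exp(-(ik²/Ω)·η + (ik²/Ω)·∫_η^∞ (α₀(s)^{-2} − 1) ds) satisfies Ψ(η)·exp((ik²/Ω)η) → K as η → +∞ and Ψ(η)·exp((ik²/Ω)(η − Δ)) → K as η → −∞, where Δ = ∫_{-∞}^∞ (α₀(s)^{-2} − 1) ds. -/

import Mathlib

open Filter Topology MeasureTheory

open Set in

lemma aux_Ioi_top {f : ℝ → ℝ} (hf : Integrable f) :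
    Tendsto (fun η : ℝ => ∫ s in Set.Ioi η, f s) atTop (𝓝 0) := by
  have h := tendsto_integral_filter_of_dominated_convergence (μ := volume)
    (F := fun η : ℝ => (Set.Ioi η).indicator f) (f := fun _ : ℝ => (0 : ℝ))
    (l := atTop) (fun a => ‖f a‖)
    (Eventually.of_forall fun η => (hf.indicator measurableSet_Ioi).1)
    (Eventually.of_forall fun η => Eventually.of_forall fun a => by
      by_cases h : a ∈ Set.Ioi η <;> simp [Set.indicator_apply, h])
    hf.norm
    (Eventually.of_forall fun a => by
      apply Tendsto.congr' _ tendsto_const_nhds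
      filter_upwards [eventually_ge_atTop a] with η hη
      simp [Set.indicator_apply, not_lt.2 hη])
  simpa [MeasureTheory.integral_indicator measurableSet_Ioi] using h

open Set in
lemma aux_Ioi_bot {f : ℝ → ℝ} (hf : Integrable f) :
    Tendsto (fun η : ℝ => ∫ s in Set.Ioi η, f s) atBot (𝓝 (∫ s, f s)) := by
  have h := tendsto_integral_filter_of_dominated_convergence (μ := volume)
    (F := fun η : ℝ => (Set.Ioi η).indicator f) (f := f)
    (l := atBot) (fun a => ‖f a‖)
    (Eventually.of_forall fun η => (hf.indicator measurableSet_Ioi).1)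
    (Eventually.of_forall fun η => Eventually.of_forall fun a => by
      by_cases h : a ∈ Set.Ioi η <;> simp [Set.indicator_apply, h])
    hf.norm
    (Eventually.of_forall fun a => by
      apply Tendsto.congr' _ tendsto_const_nhds
      filter_upwards [eventually_lt_atBot a] with η hη
      simp [Set.indicator_apply, hη])
  simpa [MeasureTheory.integral_indicator measurableSet_Ioi] using h

/-- Transparency of a BPR barrier: the wave Ψ has pure plane-wave asymptotics
at ±∞ with the only remnant of the collision being the phase shift
Δ = ∫ (α₀⁻² − 1). -/
theorem bpr_transparency (α₀ : ℝ → ℝ) (K : ℂ) (Ω k : ℝ) (hΩ : Ω ≠ 0)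
    (hcont : Continuous α₀)
    (htop : Tendsto (fun η => (α₀ η) ^ 2) atTop (𝓝 1))
    (hbot : Tendsto (fun η => (α₀ η) ^ 2) atBot (𝓝 1))
    (hint : Integrable (fun s => (α₀ s) ^ (-2 : ℤ) - 1)) :
    (Tendsto (fun η : ℝ =>
        (K * ((|α₀ η| ^ (-(3 / 2 : ℝ)) : ℝ) : ℂ)
          * Complex.exp (-(Complex.I * (k : ℂ) ^ 2 / (Ω : ℂ)) * (η : ℂ)
              + Complex.I * (k : ℂ) ^ 2 / (Ω : ℂ)
                * ((∫ s in Set.Ioi η, ((α₀ s) ^ (-2 : ℤ) - 1) : ℝ) : ℂ)))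
        * Complex.exp (Complex.I * (k : ℂ) ^ 2 / (Ω : ℂ) * (η : ℂ)))
      atTop (𝓝 K)) ∧
    (Tendsto (fun η : ℝ =>
        (K * ((|α₀ η| ^ (-(3 / 2 : ℝ)) : ℝ) : ℂ)
          * Complex.exp (-(Complex.I * (k : ℂ) ^ 2 / (Ω : ℂ)) * (η : ℂ)
              + Complex.I * (k : ℂ) ^ 2 / (Ω : ℂ)
                * ((∫ s in Set.Ioi η, ((α₀ s) ^ (-2 : ℤ) - 1) : ℝ) : ℂ)))
        * Complex.exp (Complex.I * (k : ℂ) ^ 2 / (Ω : ℂ)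
            * ((η - ∫ s, ((α₀ s) ^ (-2 : ℤ) - 1) : ℝ) : ℂ)))
      atBot (𝓝 K)) := by
  set c : ℂ := Complex.I * (k : ℂ) ^ 2 / (Ω : ℂ) with hc
  set I : ℝ → ℝ := fun η => ∫ s in Set.Ioi η, ((α₀ s) ^ (-2 : ℤ) - 1) with hI
  set Δ : ℝ := ∫ s, ((α₀ s) ^ (-2 : ℤ) - 1) with hΔ
  -- amplitude factor
  have habs_top : Tendsto (fun η => |α₀ η|) atTop (𝓝 1) := by
    have := (Real.continuous_sqrt.tendsto 1).comp htop
    simpa [Real.sqrt_sq_eq_abs, Function.comp_def] using this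
  have habs_bot : Tendsto (fun η => |α₀ η|) atBot (𝓝 1) := by
    have := (Real.continuous_sqrt.tendsto 1).comp hbot
    simpa [Real.sqrt_sq_eq_abs, Function.comp_def] using this
  have hArpow : ContinuousAt (fun x : ℝ => x ^ (-(3 / 2 : ℝ))) 1 :=
    Real.continuousAt_rpow_const 1 _ (Or.inl one_ne_zero)
  have hA_top : Tendsto (fun η => ((|α₀ η| ^ (-(3 / 2 : ℝ)) : ℝ) : ℂ)) atTop (𝓝 1) := by
    have h1 : Tendsto (fun η => (|α₀ η| ^ (-(3 / 2 : ℝ)) : ℝ)) atTop (𝓝 1) := by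
      have := hArpow.tendsto.comp habs_top
      simpa [Function.comp_def] using this
    have := (Complex.continuous_ofReal.tendsto 1).comp h1
    simpa [Function.comp_def] using this
  have hA_bot : Tendsto (fun η => ((|α₀ η| ^ (-(3 / 2 : ℝ)) : ℝ) : ℂ)) atBot (𝓝 1) := by
    have h1 : Tendsto (fun η => (|α₀ η| ^ (-(3 / 2 : ℝ)) : ℝ)) atBot (𝓝 1) := by
      have := hArpow.tendsto.comp habs_bot
      simpa [Function.comp_def] using this
    have := (Complex.continuous_ofReal.tendsto 1).comp h1
    simpa [Function.comp_def] using this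
  -- integral tails
  have hItop : Tendsto I atTop (𝓝 0) := aux_Ioi_top hint
  have hIbot : Tendsto I atBot (𝓝 Δ) := aux_Ioi_bot hint
  constructor
  · have heq : ∀ η : ℝ,
        (K * ((|α₀ η| ^ (-(3 / 2 : ℝ)) : ℝ) : ℂ)
          * Complex.exp (-c * (η : ℂ) + c * ((I η : ℝ) : ℂ)))
          * Complex.exp (c * (η : ℂ))
        = K * ((|α₀ η| ^ (-(3 / 2 : ℝ)) : ℝ) : ℂ) * Complex.exp (c * ((I η : ℝ) : ℂ)) := by
      intro η
      rw [mul_assoc, ← Complex.exp_add]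
      congr 2
      ring
    refine Tendsto.congr (fun η => (heq η).symm) ?_
    have hexp : Tendsto (fun η : ℝ => Complex.exp (c * ((I η : ℝ) : ℂ))) atTop (𝓝 1) := by
      have h0 : Tendsto (fun η : ℝ => c * ((I η : ℝ) : ℂ)) atTop (𝓝 0) := by
        have h1 : Tendsto (fun η : ℝ => ((I η : ℝ) : ℂ)) atTop (𝓝 0) := by
          simpa [Function.comp_def] using (Complex.continuous_ofReal.tendsto 0).comp hItop
        simpa using h1.const_mul c
      have := (Complex.continuous_exp.tendsto 0).comp h0
      simpa [Function.comp_def] using this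
    have := (hA_top.const_mul K).mul hexp
    simpa using this
  · have heq : ∀ η : ℝ,
        (K * ((|α₀ η| ^ (-(3 / 2 : ℝ)) : ℝ) : ℂ)
          * Complex.exp (-c * (η : ℂ) + c * ((I η : ℝ) : ℂ)))
          * Complex.exp (c * ((η - Δ : ℝ) : ℂ))
        = K * ((|α₀ η| ^ (-(3 / 2 : ℝ)) : ℝ) : ℂ)
            * Complex.exp (c * (((I η : ℝ) : ℂ) - (Δ : ℂ))) := by
      intro η
      rw [mul_assoc, ← Complex.exp_add]
      congr 2
      push_cast
      ring
    refine Tendsto.congr (fun η => (heq η).symm) ?_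
    have hexp : Tendsto (fun η : ℝ => Complex.exp (c * (((I η : ℝ) : ℂ) - (Δ : ℂ))))
        atBot (𝓝 1) := by
      have h0 : Tendsto (fun η : ℝ => c * (((I η : ℝ) : ℂ) - (Δ : ℂ))) atBot (𝓝 0) := by
        have h1 : Tendsto (fun η : ℝ => ((I η : ℝ) : ℂ) - (Δ : ℂ)) atBot (𝓝 0) := by
          have h2 : Tendsto (fun η : ℝ => ((I η : ℝ) : ℂ)) atBot (𝓝 (Δ : ℂ)) := by
            simpa [Function.comp_def] using (Complex.continuous_ofReal.tendsto Δ).comp hIbot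
          simpa using h2.sub (tendsto_const_nhds (x := (Δ : ℂ)))
        simpa using h1.const_mul c
      have := (Complex.continuous_exp.tendsto 0).comp h0
      simpa [Function.comp_def] using this
    have := (hA_bot.const_mul K).mul hexp
    simpa using this
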